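/- arXiv:1903.03868 — 14 statements merged into one kernel-verified Lean document; each statement's English description precedes it below -/
import Mathlib

section
/- Let M be an endoregular R-module and N ≤ M a submodule. Then N is finitely M-generated (i.e., there is an epimorphism M^(n) → N for some n > 0) if and only if N is a direct summand of M. -/
/-- `M` is endoregular: its endomorphism ring is von Neumann regular. -/
def IsEndoregular (R M : Type*) [Ring R] [AddCommGroup M] [Module R M] : Prop :=
  ∀ s : Module.End R M, ∃ t : Module.End R M, s * t * s = s

section aux

variable {R M : Type*} [Ring R] [AddCommGroup M] [Module R M]

/-- In an endoregular module, the range of any endomorphism is the range of an idempotent. -/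
lemma exists_idem_range (hM : IsEndoregular R M) (s : Module.End R M) :
    ∃ e : Module.End R M, e * e = e ∧ LinearMap.range e = LinearMap.range s := by
  obtain ⟨t, ht⟩ := hM s
  refine ⟨s * t, ?_, ?_⟩
  · calc s * t * (s * t) = (s * t * s) * t := by noncomm_ring
    _ = s * t := by rw [ht]
  · apply le_antisymm
    · rintro x ⟨y, rfl⟩
      exact ⟨t y, rfl⟩
    · rintro x ⟨y, rfl⟩
      refine ⟨s y, ?_⟩
      show (s * t * s) y = s y
      rw [ht]

lemma sup_idem_range (hM : IsEndoregular R M)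
    (e f : Module.End R M) (he : e * e = e) (hf : f * f = f) :
    ∃ g : Module.End R M, g * g = g ∧
      LinearMap.range g = LinearMap.range e ⊔ LinearMap.range f := by
  set u : Module.End R M := (1 - e) * f with hu
  obtain ⟨k, hk, hkr⟩ := exists_idem_range hM u
  have heu : e * u = 0 := by
    have h0 : e * u = (e - e * e) * f := by rw [hu]; noncomm_ring
    rw [h0, he, sub_self, zero_mul]
  have hek : e * k = 0 := by
    ext x
    have hx : k x ∈ LinearMap.range u := hkr ▸ LinearMap.mem_range_self k x
    obtain ⟨y, hy⟩ := hx
    show e (k x) = 0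
    rw [← hy]
    have := congrFun (congrArg DFunLike.coe heu) y
    simpa using this
  have hidem : (e + k - k * e) * (e + k - k * e) = e + k - k * e := by
    have h1 : e * (k * e) = 0 := by rw [← mul_assoc, hek, zero_mul]
    have h2 : k * (k * e) = k * e := by rw [← mul_assoc, hk]
    have h3 : k * e * e = k * e := by rw [mul_assoc, he]
    have h4 : k * e * k = 0 := by rw [mul_assoc, hek, mul_zero]
    have h5 : k * e * (k * e) = 0 := by
      rw [mul_assoc, ← mul_assoc e k, hek, zero_mul, mul_zero]
    have expand : (e + k - k * e) * (e + k - k * e)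
        = e * e + e * k + (k * e + k * k) - (e * (k * e) + k * (k * e))
          - (k * e * e + k * e * k) + k * e * (k * e) := by noncomm_ring
    rw [expand, he, hek, hk, h1, h2, h3, h4, h5]
    abel
  refine ⟨e + k - k * e, hidem, ?_⟩
  have hrange_u : LinearMap.range e ⊔ LinearMap.range u
      = LinearMap.range e ⊔ LinearMap.range f := by
    apply le_antisymm
    · refine sup_le le_sup_left ?_
      rintro x ⟨y, rfl⟩
      have h0 : u y = f y - e (f y) := by
        simp [hu, Module.End.mul_apply, LinearMap.sub_apply]
      rw [h0]
      exact Submodule.sub_mem _ (Submodule.mem_sup_right (LinearMap.mem_range_self f y))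
        (Submodule.mem_sup_left (LinearMap.mem_range_self e _))
    · refine sup_le le_sup_left ?_
      rintro x ⟨y, rfl⟩
      have h0 : f y = e (f y) + u y := by
        simp [hu, Module.End.mul_apply, LinearMap.sub_apply]
      rw [h0]
      exact Submodule.add_mem _ (Submodule.mem_sup_left (LinearMap.mem_range_self e _))
        (Submodule.mem_sup_right (LinearMap.mem_range_self u y))
  rw [← hrange_u, ← hkr]
  apply le_antisymm
  · rintro x ⟨y, rfl⟩
    have h0 : (e + k - k * e) y = e y + k (y - e y) := by
      simp [Module.End.mul_apply, map_sub]
      abel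
    rw [h0]
    exact Submodule.add_mem _ (Submodule.mem_sup_left (LinearMap.mem_range_self e _))
      (Submodule.mem_sup_right (LinearMap.mem_range_self k _))
  · refine sup_le ?_ ?_
    · rintro x ⟨y, rfl⟩
      refine ⟨e y, ?_⟩
      have h1 : e (e y) = e y := by
        have := congrFun (congrArg DFunLike.coe he) y
        simpa using this
      show e (e y) + k (e y) - k (e (e y)) = e y
      rw [h1]; abel
    · rintro x ⟨y, rfl⟩
      refine ⟨k y, ?_⟩
      have h3 : e (k y) = 0 := by
        have := congrFun (congrArg DFunLike.coe hek) y
        simpa using this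
      have h4 : k (k y) = k y := by
        have := congrFun (congrArg DFunLike.coe hk) y
        simpa using this
      show e (k y) + k (k y) - k (e (k y)) = k y
      rw [h3, h4, map_zero]; abel

lemma iSup_idem_range (hM : IsEndoregular R M) :
    ∀ (n : ℕ) (s : Fin n → Module.End R M),
    ∃ g : Module.End R M, g * g = g ∧
      LinearMap.range g = ⨆ i, LinearMap.range (s i) := by
  intro n
  induction n with
  | zero =>
    intro s
    exact ⟨0, by simp, by simp [iSup_of_empty]⟩
  | succ m ih =>
    intro s
    obtain ⟨g, hg, hgr⟩ := ih (fun i => s i.castSucc)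
    obtain ⟨e, he, her⟩ := exists_idem_range hM (s (Fin.last m))
    obtain ⟨h, hh, hhr⟩ := sup_idem_range hM g e hg he
    refine ⟨h, hh, ?_⟩
    rw [hhr, hgr, her]
    apply le_antisymm
    · exact sup_le (iSup_le fun i => le_iSup (fun j => LinearMap.range (s j)) _)
        (le_iSup (fun j => LinearMap.range (s j)) _)
    · refine iSup_le fun i => ?_
      induction i using Fin.lastCases with
      | last => exact le_sup_right
      | cast j =>
        exact le_trans (le_iSup (fun i : Fin m => LinearMap.range (s i.castSucc)) j) le_sup_left

end aux

theorem stmt_2 {R M : Type*} [Ring R] [AddCommGroup M] [Module R M]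
    (hM : IsEndoregular R M) (N : Submodule R M) :
    (∃ n : ℕ, 0 < n ∧ ∃ ρ : (Fin n → M) →ₗ[R] N, Function.Surjective ρ) ↔
      ∃ C : Submodule R M, IsCompl N C := by
  constructor
  · rintro ⟨n, -, ρ, hρ⟩
    classical
    set s : Fin n → Module.End R M :=
      fun i => N.subtype ∘ₗ ρ ∘ₗ LinearMap.single R (fun _ : Fin n => M) i with hs
    have hN : (⨆ i, LinearMap.range (s i)) = N := by
      apply le_antisymm
      · refine iSup_le fun i => ?_
        rintro x ⟨y, rfl⟩
        exact (ρ _).2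
      · intro x hx
        obtain ⟨y, hy⟩ := hρ ⟨x, hx⟩
        have h0 : ρ (∑ i, Pi.single i (y i)) = ⟨x, hx⟩ := by
          rw [Finset.univ_sum_single, hy]
        have h1 : (∑ i, ρ (Pi.single i (y i)) : N) = ⟨x, hx⟩ := by
          rw [← map_sum, h0]
        have h2 : (∑ i, ((ρ (Pi.single i (y i)) : N) : M)) = x := by
          rw [← Submodule.coe_sum, h1]
        rw [← h2]
        refine Submodule.sum_mem _ fun i _ => Submodule.mem_iSup_of_mem i ?_
        exact ⟨y i, rfl⟩
    obtain ⟨g, hg, hgr⟩ := iSup_idem_range hM n s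
    rw [hN] at hgr
    have hproj : LinearMap.IsProj N g := by
      constructor
      · intro x; rw [← hgr]; exact LinearMap.mem_range_self g x
      · intro x hx
        rw [← hgr] at hx
        obtain ⟨y, rfl⟩ := hx
        have := congrFun (congrArg DFunLike.coe hg) y
        simpa using this
    exact ⟨LinearMap.ker g, hproj.isCompl⟩
  · rintro ⟨C, hC⟩
    refine ⟨1, Nat.one_pos, (N.projectionOnto C hC) ∘ₗ (LinearMap.proj 0), ?_⟩
    intro y
    refine ⟨fun _ => (y : M), ?_⟩
    simp [Submodule.projectionOnto_apply_left]
end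

section
/- An R-module M is abelian endoregular if and only if M = Ker φ ⊕ Im φ for every φ ∈ End_R(M). -/
/-- `M` is abelian endoregular: `End_R(M)` is abelian von Neumann regular. -/
def IsAbelianEndoregular (R M : Type*) [Ring R] [AddCommGroup M] [Module R M] : Prop :=
  (∀ s : Module.End R M, ∃ t : Module.End R M, s * t * s = s) ∧
  (∀ e : Module.End R M, e * e = e → ∀ s : Module.End R M, e * s = s * e)

private lemma sq_zero_eq_zero {R M : Type*} [Ring R] [AddCommGroup M] [Module R M]
    (φ : Module.End R M) (h : IsCompl (LinearMap.ker φ) (LinearMap.range φ))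
    (hφ : φ * φ = 0) : φ = 0 := by
  have hle : LinearMap.range φ ≤ LinearMap.ker φ := by
    rintro x ⟨y, rfl⟩
    have : (φ * φ) y = 0 := by rw [hφ]; rfl
    simpa [LinearMap.mem_ker] using this
  have : LinearMap.range φ = ⊥ := by
    rw [eq_bot_iff]
    intro x hx
    have := h.disjoint
    rw [Submodule.disjoint_def] at this
    exact this x (hle hx) hx
  exact LinearMap.range_eq_bot.mp this

theorem stmt_3 {R M : Type*} [Ring R] [AddCommGroup M] [Module R M] :
    IsAbelianEndoregular R M ↔
      ∀ φ : Module.End R M, IsCompl (LinearMap.ker φ) (LinearMap.range φ) := by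
  constructor
  · rintro ⟨hreg, hab⟩ φ
    obtain ⟨ψ, hψ⟩ := hreg φ
    have hee : (ψ * φ) * (ψ * φ) = ψ * φ := by
      have : (ψ * φ) * (ψ * φ) = ψ * (φ * ψ * φ) := by noncomm_ring
      rw [this, hψ]
    have hff : (φ * ψ) * (φ * ψ) = φ * ψ := by
      have : (φ * ψ) * (φ * ψ) = (φ * ψ * φ) * ψ := by noncomm_ring
      rw [this, hψ]
    have hec := hab _ hee
    have hfc := hab _ hff
    -- φ * φ * ψ = φ
    have hffψ : φ * φ * ψ = φ := by
      have := hfc φ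
      -- (φ*ψ)*φ = φ*(φ*ψ)
      calc φ * φ * ψ = φ * (φ * ψ) := by noncomm_ring
        _ = (φ * ψ) * φ := (hfc φ).symm
        _ = φ := hψ
    constructor
    · rw [Submodule.disjoint_def]
      rintro x hk ⟨y, rfl⟩
      have hx0 : φ y = φ (ψ (φ y)) := by
        have : (φ * ψ * φ) y = φ y := by rw [hψ]
        exact this.symm
      have hψx : ψ (φ y) = 0 := by
        have h1 : ψ (φ y) = ψ (φ (ψ (φ y))) := by rw [← hx0]
        have h2 : ψ (φ (ψ (φ y))) = ((ψ * φ) * ψ) (φ y) := rfl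
        have h3 : (ψ * φ) * ψ = ψ * (ψ * φ) := hec ψ
        rw [h1, h2, h3]
        have : φ (φ y) = 0 := by
          rw [LinearMap.mem_ker] at hk
          exact hk
        show ψ (ψ (φ (φ y))) = 0
        rw [this]; simp
      rw [hx0, hψx]; simp
    · rw [codisjoint_iff, eq_top_iff]
      intro x _
      rw [Submodule.mem_sup]
      refine ⟨x - φ (ψ x), ?_, φ (ψ x), ⟨ψ x, rfl⟩, by abel⟩
      rw [LinearMap.mem_ker, map_sub]
      have : φ (φ (ψ x)) = (φ * φ * ψ) x := rfl
      rw [this, hffψ, sub_self]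
  · intro hcompl
    constructor
    · intro φ
      have h := hcompl φ
      set p := LinearMap.ker φ
      set q := LinearMap.range φ
      have hmap : ∀ x ∈ q, φ x ∈ q := fun x _ => ⟨x, rfl⟩
      set g : q →ₗ[R] q := φ.restrict hmap with hg
      have ginj : Function.Injective g := by
        rw [injective_iff_map_eq_zero]
        intro a ha
        have ha' : φ a.1 = 0 := congrArg Subtype.val ha
        have := h.disjoint
        rw [Submodule.disjoint_def] at this
        exact Subtype.ext (this a.1 (LinearMap.mem_ker.mpr ha') a.2)
      have gsurj : Function.Surjective g := by
        rintro ⟨y, m, rfl⟩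
        have hm : m ∈ p ⊔ q := by rw [h.sup_eq_top]; trivial
        obtain ⟨k, hk, r, hr, hkr⟩ := Submodule.mem_sup.mp hm
        refine ⟨⟨r, hr⟩, Subtype.ext ?_⟩
        show φ r = φ m
        rw [← hkr, map_add, LinearMap.mem_ker.mp hk, zero_add]
      set E := LinearEquiv.ofBijective g ⟨ginj, gsurj⟩ with hE
      refine ⟨q.subtype ∘ₗ E.symm.toLinearMap ∘ₗ (q.linearProjOfIsCompl p h.symm), ?_⟩
      ext x
      show φ ((q.subtype ∘ₗ E.symm.toLinearMap ∘ₗ q.linearProjOfIsCompl p h.symm) (φ x)) = φ x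
      have hproj : q.linearProjOfIsCompl p h.symm (φ x) = ⟨φ x, ⟨x, rfl⟩⟩ :=
        Submodule.linearProjOfIsCompl_apply_left h.symm ⟨φ x, ⟨x, rfl⟩⟩
      simp only [LinearMap.comp_apply, hproj]
      have : g (E.symm ⟨φ x, ⟨x, rfl⟩⟩) = ⟨φ x, ⟨x, rfl⟩⟩ := E.apply_symm_apply _
      exact congrArg Subtype.val this
    · intro e he s
      have h1 : e * s * (1 - e) = 0 := by
        apply sq_zero_eq_zero _ (hcompl _)
        have h0 : (1 - e) * e = 0 := by rw [sub_mul, one_mul, he, sub_self]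
        have : (e * s * (1 - e)) * (e * s * (1 - e))
            = e * s * ((1 - e) * e) * (s * (1 - e)) := by noncomm_ring
        rw [this, h0, mul_zero, zero_mul]
      have h2 : (1 - e) * s * e = 0 := by
        apply sq_zero_eq_zero _ (hcompl _)
        have h0 : e * (1 - e) = 0 := by rw [mul_sub, mul_one, he, sub_self]
        have : ((1 - e) * s * e) * ((1 - e) * s * e)
            = (1 - e) * s * (e * (1 - e)) * (s * e) := by noncomm_ring
        rw [this, h0, mul_zero, zero_mul]
      have ha : e * s = e * s * e := by
        have : e * s * (1 - e) = e * s - e * s * e := by noncomm_ring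
        rw [this] at h1
        exact sub_eq_zero.mp h1
      have hb : s * e = e * s * e := by
        have : (1 - e) * s * e = s * e - e * s * e := by noncomm_ring
        rw [this] at h2
        exact (sub_eq_zero.mp h2)
      rw [ha, hb]
  -- done
end

section
/- Every direct summand of an abelian endoregular module is abelian endoregular. -/
theorem stmt_4 {R M : Type*} [Ring R] [AddCommGroup M] [Module R M]
    (hM : IsAbelianEndoregular R M) (N : Submodule R M)
    (hN : ∃ C : Submodule R M, IsCompl N C) :
    IsAbelianEndoregular R N := by
  obtain ⟨C, hC⟩ := hN
  let π : M →ₗ[R] N := N.linearProjOfIsCompl C hC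
  let ι : N →ₗ[R] M := N.subtype
  have hπι : ∀ x : N, π (ι x) = x := fun x =>
    Submodule.linearProjOfIsCompl_apply_left hC x
  let L : Module.End R N → Module.End R M := fun s => ι ∘ₗ s ∘ₗ π
  have hinj : Function.Injective ι := Subtype.coe_injective
  constructor
  · intro s
    obtain ⟨T, hT⟩ := hM.1 (L s)
    refine ⟨π ∘ₗ T ∘ₗ ι, ?_⟩
    ext x
    have h := congrArg (fun f : Module.End R M => f (ι x)) hT
    simp only [Module.End.mul_apply, LinearMap.comp_apply, L, hπι, Submodule.coe_subtype] at h
    simp only [Module.End.mul_apply, LinearMap.comp_apply]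
    exact congrArg Subtype.val (hinj h)
  · intro e he s
    have hE : L e * L e = L e := by
      ext x
      have h := congrArg (fun f : Module.End R N => f (π x)) he
      simp only [Module.End.mul_apply] at h
      simp only [L, Module.End.mul_apply, LinearMap.comp_apply, hπι]
      exact congrArg ι h
    have hcomm := hM.2 (L e) hE (L s)
    ext x
    have h := congrArg (fun f : Module.End R M => f (ι x)) hcomm
    simp only [Module.End.mul_apply, LinearMap.comp_apply, L, hπι, Submodule.coe_subtype] at h
    simp only [Module.End.mul_apply, LinearMap.comp_apply]
    exact congrArg Subtype.val (hinj h)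
end

section
/- An R-module M is abelian endoregular if and only if M is endoregular and every M-generated submodule of M is fully invariant. -/
/-- `N` is an `M`-generated submodule of `M`: it is the sum of the images of
homomorphisms `M → M` landing in `N`. -/
def IsMGenerated {R M : Type*} [Ring R] [AddCommGroup M] [Module R M]
    (N : Submodule R M) : Prop :=
  N = ⨆ f : {f : Module.End R M // LinearMap.range f ≤ N}, LinearMap.range f.val

def IsFullyInvariant {R M : Type*} [Ring R] [AddCommGroup M] [Module R M]
    (N : Submodule R M) : Prop :=
  ∀ φ : Module.End R M, N.map φ ≤ N

/-- If `q` is idempotent and `range r ≤ range q` then `q * r = r`. -/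
lemma aux_idem_absorb {R M : Type*} [Ring R] [AddCommGroup M] [Module R M]
    (q r : Module.End R M) (hq : q * q = q)
    (h : LinearMap.range r ≤ LinearMap.range q) : q * r = r := by
  ext x
  obtain ⟨y, hy⟩ := h ⟨x, rfl⟩
  have : q (r x) = r x := by
    rw [← hy]
    have := congrFun (congrArg (fun (u : Module.End R M) => (u : M → M)) hq) y
    simpa [Module.End.mul_apply] using this
  simpa [Module.End.mul_apply] using this

lemma aux_range_gen {R M : Type*} [Ring R] [AddCommGroup M] [Module R M]
    (p : Module.End R M) : IsMGenerated (LinearMap.range p) := by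
  unfold IsMGenerated
  apply le_antisymm
  · exact le_iSup (fun f : {f : Module.End R M // LinearMap.range f ≤ LinearMap.range p} =>
      LinearMap.range f.val) ⟨p, le_refl _⟩
  · exact iSup_le fun f => f.2

theorem stmt_6 {R M : Type*} [Ring R] [AddCommGroup M] [Module R M] :
    IsAbelianEndoregular R M ↔
      ((∀ s : Module.End R M, ∃ t : Module.End R M, s * t * s = s) ∧
        ∀ N : Submodule R M, IsMGenerated N → IsFullyInvariant N) := by
  constructor
  · rintro ⟨hreg, hab⟩
    refine ⟨hreg, ?_⟩
    intro N hN φ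
    conv_lhs => rw [hN]
    rw [Submodule.map_iSup]
    refine iSup_le fun f => ?_
    obtain ⟨t, ht⟩ := hreg f.val
    have hidem : (f.val * t) * (f.val * t) = f.val * t := by
      calc (f.val * t) * (f.val * t) = (f.val * t * f.val) * t := by
            rw [mul_assoc, mul_assoc, mul_assoc]
        _ = f.val * t := by rw [ht]
    have hcomm := hab (f.val * t) hidem φ
    have key : φ * f.val = f.val * (t * φ * f.val) := by
      have h5 : φ * (f.val * t * f.val) = ((f.val * t) * φ) * f.val := by
        rw [← mul_assoc, hcomm]
      rw [ht] at h5
      rw [h5]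
      simp only [mul_assoc]
    have : Submodule.map φ (LinearMap.range f.val) = LinearMap.range (φ * f.val) := by
      rw [Module.End.mul_eq_comp, LinearMap.range_comp]
    rw [this, key, Module.End.mul_eq_comp]
    exact le_trans (LinearMap.range_comp_le_range _ _) f.2
  · rintro ⟨hreg, hfi⟩
    refine ⟨hreg, ?_⟩
    intro e he s
    have h1 : Submodule.map s (LinearMap.range e) ≤ LinearMap.range e :=
      hfi _ (aux_range_gen e) s
    have h1' : e * (s * e) = s * e := by
      apply aux_idem_absorb e (s * e) he
      rw [Module.End.mul_eq_comp, LinearMap.range_comp]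
      exact h1
    have hq2 : (1 - e) * (1 - e) = 1 - e := by
      rw [mul_sub, sub_mul, sub_mul, mul_one, one_mul, he]
      abel
    have h2 : Submodule.map s (LinearMap.range (1 - e)) ≤ LinearMap.range (1 - e) :=
      hfi _ (aux_range_gen (1 - e)) s
    have h2' : (1 - e) * (s * (1 - e)) = s * (1 - e) := by
      apply aux_idem_absorb (1 - e) (s * (1 - e)) hq2
      rw [Module.End.mul_eq_comp, LinearMap.range_comp]
      exact h2
    have h3 : e * (s * (1 - e)) = 0 := by
      have h := h2'
      rw [sub_mul, one_mul, sub_eq_self] at h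
      exact h
    have h4 : e * s = e * s * e := by
      rw [← mul_assoc, mul_sub, mul_one, sub_eq_zero] at h3
      exact h3
    rw [h4, mul_assoc, h1']
end

section
/- Every direct summand of an abelian endoregular module M is a fully invariant submodule of M. -/
theorem stmt_7 {R M : Type*} [Ring R] [AddCommGroup M] [Module R M]
    (hM : IsAbelianEndoregular R M) (N : Submodule R M)
    (hN : ∃ C : Submodule R M, IsCompl N C) :
    ∀ φ : Module.End R M, N.map φ ≤ N := by
  obtain ⟨C, hC⟩ := hN
  set e : Module.End R M := N.subtype ∘ₗ N.projectionOnto C hC with he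
  have hee : e * e = e := by
    ext x
    simp [he, Submodule.projectionOnto_apply_left]
  intro φ y hy
  obtain ⟨x, hx, rfl⟩ := hy
  have hcomm := hM.2 e hee φ
  have hex : e x = x := by
    have := Submodule.projectionOnto_apply_left hC ⟨x, hx⟩
    simp [he, this]
  have : φ x = e (φ x) := by
    conv_lhs => rw [← hex]
    have h2 : (e * φ) x = (φ * e) x := by rw [hcomm]
    simpa using h2.symm
  rw [this]
  exact (N.projectionOnto C hC (φ x)).2
end

section
/- Let M be an endoregular R-module. Then M is abelian endoregular if and only if for any two M-generated submodules A, B of M with A ∩ B = 0, we have Hom_R(A, B) = 0. -/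
lemma mgen_range {R M : Type*} [Ring R] [AddCommGroup M] [Module R M]
    (g : Module.End R M) : IsMGenerated (LinearMap.range g) := by
  refine le_antisymm ?_ ?_
  · exact le_iSup_of_le ⟨g, le_rfl⟩ le_rfl
  · exact iSup_le fun f => f.2

theorem stmt_9 {R M : Type*} [Ring R] [AddCommGroup M] [Module R M]
    (hM : ∀ s : Module.End R M, ∃ t : Module.End R M, s * t * s = s) :
    IsAbelianEndoregular R M ↔
      ∀ A B : Submodule R M, IsMGenerated A → IsMGenerated B → A ⊓ B = ⊥ →
        ∀ f : A →ₗ[R] B, f = 0 := by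
  constructor
  · rintro ⟨-, hc⟩ A B hA hB hAB f
    set F : A →ₗ[R] M := B.subtype ∘ₗ f with hFdef
    set N : Submodule R M := (LinearMap.ker F).map A.subtype with hNdef
    have hAN : A ≤ N := by
      conv_lhs => rw [hA]
      refine iSup_le ?_
      rintro ⟨g, hg⟩ x ⟨z, rfl⟩
      set g' : M →ₗ[R] A :=
        LinearMap.codRestrict A g (fun c => hg (LinearMap.mem_range_self g c)) with hg'
      set s : Module.End R M := B.subtype ∘ₗ f ∘ₗ g' with hs
      obtain ⟨t, ht⟩ := hM s
      set e : Module.End R M := s * t with hedef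
      have he : e * e = e := by rw [hedef, ← mul_assoc, ht]
      have hce := hc e he
      have hsB : ∀ x, s x ∈ B := fun x => (f (g' x)).2
      have hge : ∀ x, g (e x) = 0 := by
        intro x
        have h2 : g (e x) = e (g x) :=
          (congrFun (congrArg DFunLike.coe (hce g)) x).symm
        have h3 : g (e x) ∈ A ⊓ B := by
          constructor
          · exact hg (LinearMap.mem_range_self g _)
          · rw [h2]
            have : e (g x) = s (t (g x)) := rfl
            rw [this]
            exact hsB _
        rw [hAB] at h3
        exact h3
      have hse : s = s * e := by
        conv_lhs => rw [← ht]
        exact hce s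
      have hs0 : ∀ x, s x = 0 := by
        intro x
        have h1 : s x = s (e x) := by
          conv_lhs => rw [hse]
          exact Module.End.mul_apply s e x
        rw [h1]
        have h2 : g' (e x) = 0 := Subtype.ext (hge x)
        show B.subtype (f (g' (e x))) = 0
        rw [h2, map_zero, map_zero]
      refine ⟨g' z, ?_, rfl⟩
      have hFs : F (g' z) = s z := rfl
      simp only [SetLike.mem_coe, LinearMap.mem_ker, hFs]
      exact hs0 z
    ext x
    obtain ⟨a, haker, hax⟩ := hAN x.2
    have : a = x := Subtype.ext hax
    rw [this] at haker
    have : F x = 0 := haker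
    simpa [hFdef] using this
  · intro h
    refine ⟨hM, ?_⟩
    have key : ∀ e : Module.End R M, e * e = e →
        ∀ s : Module.End R M, (1 - e) * s * e = 0 := by
      intro e he s
      set A := LinearMap.range e with hAdef
      set B := LinearMap.range (1 - e) with hBdef
      have hAB : A ⊓ B = ⊥ := by
        rw [eq_bot_iff]
        rintro x ⟨⟨a, ha⟩, ⟨b, hb⟩⟩
        have h1 : e x = x := by
          rw [← ha]
          have : e (e a) = (e * e) a := rfl
          rw [this, he]
        have h2 : e x = 0 := by
          rw [← hb]
          have : e ((1 - e) b) = (e * (1 - e)) b := rfl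
          rw [this, mul_sub, mul_one, he, sub_self]
          rfl
        exact (Submodule.mem_bot _).2 (by rw [← h1, h2])
      set u : Module.End R M := (1 - e) * s * e with hu
      have huB : ∀ x, u x ∈ B := by
        intro x
        have : u x = (1 - e) ((s * e) x) := by rw [hu, mul_assoc]; rfl
        rw [this]
        exact LinearMap.mem_range_self _ _
      set F : A →ₗ[R] B := LinearMap.codRestrict B (u ∘ₗ A.subtype)
        (fun c => huB c.1) with hF
      have hF0 := h A B (mgen_range e) (mgen_range (1 - e)) hAB F
      have hu0 : ∀ a : M, a ∈ A → u a = 0 := by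
        intro a ha
        have h4 := congrFun (congrArg DFunLike.coe hF0) ⟨a, ha⟩
        have h5 := congrArg Subtype.val h4
        rw [← show (F ⟨a, ha⟩ : M) = u a from rfl]
        simpa using h5
      ext x
      have h1 : u (e x) = u x := by
        have : u (e x) = (u * e) x := rfl
        rw [this, hu, mul_assoc _ e e, he]
      rw [← h1]
      exact hu0 (e x) (LinearMap.mem_range_self e x)
    intro e he s
    have h1e : (1 - e) * (1 - e) = 1 - e := by
      rw [sub_mul, one_mul, mul_sub, mul_one, he]
      abel
    have h1 := key e he s
    have h2 := key (1 - e) h1e s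
    rw [sub_sub_cancel] at h2
    have h3 : e * s - s * e = e * s * (1 - e) - (1 - e) * s * e := by noncomm_ring
    rw [h1, h2, sub_zero] at h3
    exact sub_eq_zero.mp h3
end

section
/- Let M be an endoregular R-module. Then M is abelian endoregular if and only if whenever B is an M-generated submodule of M such that B ⊕ B embeds in M, then B = 0. -/
lemma aux_comm_reg {A : Type*} [Ring A] (h t : A) (ht : h * t * h = h)
    (c : ∀ s, h * t * s = s * (h * t)) (c' : ∀ s, t * h * s = s * (t * h)) :
    h * t = t * h := by
  have a1 : h * t * (t * h) = h * t := by
    calc h * t * (t * h) = h * (t * h * t) := by rw [c' t]; noncomm_ring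
      _ = h * t * h * t := by noncomm_ring
      _ = h * t := by rw [ht]
  have a2 : t * h * (h * t) = t * h := by
    calc t * h * (h * t) = t * (h * t * h) := by rw [c h]; noncomm_ring
      _ = t * h := by rw [ht]
  calc h * t = h * t * (t * h) := a1.symm
    _ = t * h * (h * t) := by rw [c (t*h)]
    _ = t * h := a2

theorem stmt_10 {R M : Type*} [Ring R] [AddCommGroup M] [Module R M]
    (hM : ∀ s : Module.End R M, ∃ t : Module.End R M, s * t * s = s) :
    IsAbelianEndoregular R M ↔
      ∀ B : Submodule R M, IsMGenerated B →
        (∃ f : (B × B) →ₗ[R] M, Function.Injective f) → B = ⊥ := by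
  constructor
  · rintro ⟨hreg, hcent⟩ B hBgen ⟨f, hf⟩
    have hf0 : ∀ v : B × B, f v = 0 → v = 0 := by
      intro v hv
      apply hf
      simpa using hv
    have key : ∀ g : Module.End R M, LinearMap.range g ≤ B → g = 0 := by
      intro g hg
      have hgB : ∀ x, g x ∈ B := fun x => hg ⟨x, rfl⟩
      set g' : M →ₗ[R] B := g.codRestrict B hgB with hg'def
      set h₁ : Module.End R M := f ∘ₗ (LinearMap.inl R B B) ∘ₗ g' with hh₁
      set h₂ : Module.End R M := f ∘ₗ (LinearMap.inr R B B) ∘ₗ g' with hh₂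
      have h₁app : ∀ x, h₁ x = f (g' x, 0) := fun x => rfl
      have h₂app : ∀ x, h₂ x = f (0, g' x) := fun x => rfl
      obtain ⟨t₁, ht₁⟩ := hM h₁
      obtain ⟨t₂, ht₂⟩ := hM h₂
      -- idempotents E_i = h_i * t_i and F_i = t_i * h_i
      have idem1 : (h₁ * t₁) * (h₁ * t₁) = h₁ * t₁ := by
        have : (h₁ * t₁) * (h₁ * t₁) = (h₁ * t₁ * h₁) * t₁ := by noncomm_ring
        rw [this, ht₁]
      have idem1' : (t₁ * h₁) * (t₁ * h₁) = t₁ * h₁ := by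
        have : (t₁ * h₁) * (t₁ * h₁) = t₁ * (h₁ * t₁ * h₁) := by noncomm_ring
        rw [this, ht₁]
      have idem2 : (h₂ * t₂) * (h₂ * t₂) = h₂ * t₂ := by
        have : (h₂ * t₂) * (h₂ * t₂) = (h₂ * t₂ * h₂) * t₂ := by noncomm_ring
        rw [this, ht₂]
      have idem2' : (t₂ * h₂) * (t₂ * h₂) = t₂ * h₂ := by
        have : (t₂ * h₂) * (t₂ * h₂) = t₂ * (h₂ * t₂ * h₂) := by noncomm_ring
        rw [this, ht₂]
      have c1 := hcent _ idem1
      have c1' := hcent _ idem1'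
      have c2 := hcent _ idem2
      have c2' := hcent _ idem2'
      -- E_i = F_i
      have eq1 : h₁ * t₁ = t₁ * h₁ := aux_comm_reg h₁ t₁ ht₁ c1 c1'
      have eq2 : h₂ * t₂ = t₂ * h₂ := aux_comm_reg h₂ t₂ ht₂ c2 c2'
      set E₁ : Module.End R M := h₁ * t₁ with hE₁
      set E₂ : Module.End R M := h₂ * t₂ with hE₂
      -- kernels of h₁ and h₂ agree
      have ker12 : ∀ x, h₁ x = 0 ↔ h₂ x = 0 := by
        intro x
        constructor
        · intro hx
          rw [h₁app] at hx
          have := hf0 _ hx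
          rw [h₂app, (Prod.mk.injEq _ _ _ _).mp this |>.1]
          simpa using congrArg f (Prod.ext rfl rfl) |>.symm ▸ (by
            show f (0, (0 : B)) = 0
            exact map_zero f)
        · intro hx
          rw [h₂app] at hx
          have := hf0 _ hx
          rw [h₁app, (Prod.mk.injEq _ _ _ _).mp this |>.2]
          show f ((0 : B), 0) = 0
          exact map_zero f
      -- ker E₁ = ker h₁ etc.
      have kerE1 : ∀ x, E₁ x = 0 ↔ h₁ x = 0 := by
        intro x
        constructor
        · intro hx
          have : h₁ = h₁ * E₁ := by
            rw [← c1 h₁, hE₁]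
            exact ht₁.symm
          rw [this]
          show h₁ (E₁ x) = 0
          rw [hx, map_zero]
        · intro hx
          rw [eq1]
          show t₁ (h₁ x) = 0
          rw [hx, map_zero]
      have kerE2 : ∀ x, E₂ x = 0 ↔ h₂ x = 0 := by
        intro x
        constructor
        · intro hx
          have : h₂ = h₂ * E₂ := by
            rw [← c2 h₂, hE₂]
            exact ht₂.symm
          rw [this]
          show h₂ (E₂ x) = 0
          rw [hx, map_zero]
        · intro hx
          rw [eq2]
          show t₂ (h₂ x) = 0
          rw [hx, map_zero]
      -- range h₁ ∩ range h₂ = 0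
      have hint : ∀ a b : M, h₁ a = h₂ b → h₁ a = 0 := by
        intro a b hab
        rw [h₁app, h₂app] at hab
        have : ((g' a, 0) : B × B) = (0, g' b) := hf hab
        have hga : g' a = 0 := ((Prod.mk.injEq _ _ _ _).mp this).1
        rw [h₁app, hga]
        show f ((0 : B), 0) = 0
        exact map_zero f
      -- conclude E₁ = 0 pointwise
      have hE₁0 : ∀ x, E₁ x = 0 := by
        intro x
        have step1 : E₂ (x - E₂ x) = 0 := by
          rw [map_sub]
          have : E₂ (E₂ x) = E₂ x := by
            rw [← Module.End.mul_apply, idem2]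
          rw [this, sub_self]
        have step2 : E₁ (x - E₂ x) = 0 := by
          rw [kerE1, ker12, ← kerE2]
          exact step1
        have step3 : E₁ x = E₁ (E₂ x) := by
          have := step2
          rw [map_sub, sub_eq_zero] at this
          exact this
        -- E₁ (E₂ x) ∈ range h₁ ∩ range h₂
        have r1 : E₁ (E₂ x) = h₁ (t₁ (E₂ x)) := rfl
        have r2 : E₁ (E₂ x) = h₂ (t₂ (E₁ x)) := by
          have comm : E₁ * E₂ = E₂ * E₁ := c1 E₂
          calc E₁ (E₂ x) = (E₁ * E₂) x := rfl
            _ = (E₂ * E₁) x := by rw [comm]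
            _ = h₂ (t₂ (E₁ x)) := rfl
        have := hint (t₁ (E₂ x)) (t₂ (E₁ x)) (by rw [← r1, ← r2])
        rw [step3, r1, this]
      -- so h₁ = 0 and then g = 0
      have hh₁0 : ∀ x, h₁ x = 0 := fun x => (kerE1 x).mp (hE₁0 x)
      ext x
      have := hh₁0 x
      rw [h₁app] at this
      have hg0 : g' x = 0 := ((Prod.mk.injEq _ _ _ _).mp (hf0 _ this)).1
      have : g x = ((g' x : B) : M) := rfl
      rw [this, hg0]
      rfl
    -- B = ⊥
    refine le_antisymm ?_ bot_le
    rw [hBgen]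
    refine iSup_le fun f' => ?_
    rw [key f'.1 f'.2, LinearMap.range_zero]
  · intro h
    refine ⟨hM, ?_⟩
    have key : ∀ a : Module.End R M, a * a = 0 → a = 0 := by
      intro a ha
      obtain ⟨t, ht⟩ := hM a
      set B := LinearMap.range a with hB
      have hgen : IsMGenerated B := by
        refine le_antisymm ?_ (iSup_le fun f => f.2)
        exact le_iSup (fun f : {f : Module.End R M // LinearMap.range f ≤ B} =>
          LinearMap.range f.val) ⟨a, le_rfl⟩
      set φ : (B × B) →ₗ[R] M :=
        (t ∘ₗ B.subtype) ∘ₗ LinearMap.fst R B B + B.subtype ∘ₗ LinearMap.snd R B B with hφ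
      have φapp : ∀ p : B × B, φ p = t (p.1 : M) + (p.2 : M) := fun p => rfl
      have hφinj : Function.Injective φ := by
        rw [← LinearMap.ker_eq_bot]
        refine le_antisymm ?_ bot_le
        rintro ⟨x, y⟩ hp
        have hp0 : t (x : M) + (y : M) = 0 := hp
        obtain ⟨m, hm⟩ := x.2
        obtain ⟨m', hm'⟩ := y.2
        have hax : a (t (x : M)) = (x : M) := by
          rw [← hm, ← Module.End.mul_apply, ← Module.End.mul_apply, ht]
        have hay : a (y : M) = 0 := by
          rw [← hm', ← Module.End.mul_apply, ha]; rfl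
        have hx0 : (x : M) = 0 := by
          have := congrArg a hp0
          rw [map_add, hax, hay, add_zero, map_zero] at this
          exact this
        have hy0 : (y : M) = 0 := by
          rw [hx0, map_zero, zero_add] at hp0
          exact hp0
        refine (Submodule.mem_bot _).mpr ?_
        exact Prod.ext (Subtype.ext hx0) (Subtype.ext hy0)
      have hB0 := h B hgen ⟨φ, hφinj⟩
      exact LinearMap.range_eq_bot.mp (hB.symm ▸ hB0)
    intro e he s
    have h0 : (1 - e) * e = 0 := by rw [sub_mul, one_mul, he, sub_self]
    have h0' : e * (1 - e) = 0 := by rw [mul_sub, mul_one, he, sub_self]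
    have a1 : e * s - e * s * e = 0 := by
      apply key
      have rw1 : e * s - e * s * e = e * s * (1 - e) := by noncomm_ring
      rw [rw1]
      calc e * s * (1 - e) * (e * s * (1 - e))
          = e * s * ((1 - e) * e) * (s * (1 - e)) := by noncomm_ring
        _ = 0 := by rw [h0]; noncomm_ring
    have a2 : s * e - e * s * e = 0 := by
      apply key
      have rw1 : s * e - e * s * e = (1 - e) * s * e := by noncomm_ring
      rw [rw1]
      calc (1 - e) * s * e * ((1 - e) * s * e)
          = (1 - e) * s * (e * (1 - e)) * (s * e) := by noncomm_ring
        _ = 0 := by rw [h0']; noncomm_ring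
    have := sub_eq_zero.mp a1
    have := sub_eq_zero.mp a2
    rw [sub_eq_zero] at a1 a2
    rw [a1, a2]
end

section
/- Let M be a unit endoregular R-module. If M = Im φ + Ker φ for every φ ∈ End_R(M), then M is abelian endoregular. -/
theorem stmt_11 {R M : Type*} [Ring R] [AddCommGroup M] [Module R M]
    (hM : ∀ s : Module.End R M, ∃ u : (Module.End R M)ˣ, s * (u : Module.End R M) * s = s)
    (h : ∀ φ : Module.End R M, LinearMap.range φ ⊔ LinearMap.ker φ = ⊤) :
    IsAbelianEndoregular R M := by
  have sq : ∀ a : Module.End R M, a * a = 0 → a = 0 := by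
    intro a ha
    have hle : LinearMap.range a ≤ LinearMap.ker a := by
      rintro y ⟨x, rfl⟩
      have : (a * a) x = 0 := by rw [ha]; rfl
      exact this
    have hker : LinearMap.ker a = ⊤ := by
      rw [← h a, sup_eq_right.mpr hle]
    exact LinearMap.ker_eq_top.mp hker
  refine ⟨fun s => (hM s).elim fun u hu => ⟨u, hu⟩, fun e he s => ?_⟩
  have h1 : e * s - e * s * e = 0 := by
    apply sq
    calc (e*s - e*s*e) * (e*s - e*s*e)
        = e*s*(e*s) - e*s*(e*s*e) - e*s*(e*e)*s + e*s*(e*e)*(s*e) := by noncomm_ring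
      _ = 0 := by rw [he]; noncomm_ring
  have h2 : s * e - e * s * e = 0 := by
    apply sq
    calc (s*e - e*s*e) * (s*e - e*s*e)
        = s*e*(s*e) - s*(e*e)*(s*e) - e*s*e*(s*e) + e*s*(e*e)*(s*e) := by noncomm_ring
      _ = 0 := by rw [he]; noncomm_ring
  have := sub_eq_zero.mp h1
  rw [this, ← sub_eq_zero.mp h2]
end

section
/- Let M be a unit endoregular R-module. If every idempotent in End_R(M) commutes with every automorphism of M, then M is abelian endoregular. -/
theorem stmt_12 {R M : Type*} [Ring R] [AddCommGroup M] [Module R M]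
    (hM : ∀ s : Module.End R M, ∃ u : (Module.End R M)ˣ, s * (u : Module.End R M) * s = s)
    (h : ∀ e : Module.End R M, e * e = e →
      ∀ u : (Module.End R M)ˣ, e * (u : Module.End R M) = (u : Module.End R M) * e) :
    IsAbelianEndoregular R M := by
  constructor
  · intro s
    obtain ⟨u, hu⟩ := hM s
    exact ⟨u, hu⟩
  · intro e he s
    have key : ∀ f : Module.End R M, f * f = f → ∀ r : Module.End R M,
        f * r * (1 - f) = 0 := by
      intro f hf r
      have h0 : (1 - f) * f = 0 := by rw [sub_mul, one_mul, hf, sub_self]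
      have ha2 : (f * r * (1 - f)) * (f * r * (1 - f)) = 0 := by
        have e1 : (f * r * (1 - f)) * (f * r * (1 - f))
            = f * r * ((1 - f) * f) * (r * (1 - f)) := by noncomm_ring
        rw [e1, h0, mul_zero, zero_mul]
      have hsq : (1 + f * r * (1 - f)) * (1 - f * r * (1 - f)) = 1 := by
        have : (1 + f * r * (1 - f)) * (1 - f * r * (1 - f))
            = 1 - (f * r * (1 - f)) * (f * r * (1 - f)) := by noncomm_ring
        rw [this, ha2, sub_zero]
      have hsq' : (1 - f * r * (1 - f)) * (1 + f * r * (1 - f)) = 1 := by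
        have : (1 - f * r * (1 - f)) * (1 + f * r * (1 - f))
            = 1 - (f * r * (1 - f)) * (f * r * (1 - f)) := by noncomm_ring
        rw [this, ha2, sub_zero]
      have hcomm := h f hf ⟨1 + f * r * (1 - f), 1 - f * r * (1 - f), hsq, hsq'⟩
      have hcomm' : f * (1 + f * r * (1 - f)) = (1 + f * r * (1 - f)) * f := hcomm
      rw [mul_add, add_mul, mul_one, one_mul] at hcomm'
      have hfa : f * (f * r * (1 - f)) = f * r * (1 - f) := by
        rw [← mul_assoc, ← mul_assoc, hf]
      have haf : f * r * (1 - f) * f = 0 := by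
        rw [mul_assoc, h0, mul_zero]
      rw [hfa, haf, add_zero] at hcomm'
      exact add_eq_left.mp hcomm' 
    have h1 := key e he s
    have h2 : (1 - e) * (1 - e) = 1 - e := by
      rw [sub_mul, one_mul, mul_sub, mul_one, he]
      abel
    have h3 := key (1 - e) h2 s
    rw [sub_sub_cancel] at h3
    have hes : e * s = e * s * e := by
      have : e * s * (1 - e) = e * s - e * s * e := by rw [mul_sub, mul_one]
      rw [this] at h1
      exact (sub_eq_zero.mp h1)
    have hse : s * e = e * s * e := by
      have : (1 - e) * s * e = s * e - e * s * e := by noncomm_ring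
      rw [this] at h3
      exact sub_eq_zero.mp h3
    rw [hes, hse]
end

section
/- Let M be an R-module and L a fully invariant direct summand of M. If L ≤ N ≤ M, then L is a fully invariant submodule of N (i.e., α(L) ⊆ L for every α ∈ End_R(N)). -/
theorem stmt_13 {R M : Type*} [Ring R] [AddCommGroup M] [Module R M]
    (L N : Submodule R M)
    (hfi : ∀ φ : Module.End R M, L.map φ ≤ L)
    (hds : ∃ C : Submodule R M, IsCompl L C)
    (hLN : L ≤ N) :
    ∀ α : Module.End R N, (L.comap N.subtype).map α ≤ L.comap N.subtype := by
  obtain ⟨C, hC⟩ := hds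
  intro α y hy
  obtain ⟨x, hx, rfl⟩ := hy
  set π := L.linearProjOfIsCompl C hC
  set φ : Module.End R M :=
    N.subtype ∘ₗ α ∘ₗ (Submodule.inclusion hLN) ∘ₗ π
  have hx' : (x : M) ∈ L := hx
  have hφ : φ (x : M) = ((α x : N) : M) := by
    have hπ : π (x : M) = ⟨(x : M), hx'⟩ :=
      Submodule.linearProjOfIsCompl_apply_left hC ⟨(x : M), hx'⟩
    simp only [φ, LinearMap.comp_apply, hπ]
    rfl
  have := hfi φ ⟨(x : M), hx', hφ⟩
  simpa using this
end

section
/- Let M be an abelian endoregular R-module and N an M-generated submodule of M. Then N is an abelian endoregular module, i.e., End_R(N) is an abelian von Neumann regular ring. -/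
section RingLemmas
variable {A : Type*} [Ring A]

lemma grpInv_unique (hcomm : ∀ e : A, e * e = e → ∀ s : A, e * s = s * e)
    {a b b' : A}
    (h1 : a * b * a = a) (h2 : b * a * b = b) (h3 : a * b = b * a)
    (h1' : a * b' * a = a) (h2' : b' * a * b' = b') (h3' : a * b' = b' * a) :
    b = b' := by
  have hee : (a*b) * (a*b) = a*b := by
    rw [show (a*b)*(a*b) = (a*b*a)*b by noncomm_ring, h1]
  have h4 : (a*b)*(a*b') = a*b' := by
    rw [show (a*b)*(a*b') = (a*b*a)*b' by noncomm_ring, h1]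
  have h5 : (a*b')*(a*b) = a*b := by
    rw [show (a*b')*(a*b) = (a*b'*a)*b by noncomm_ring, h1']
  have hf : a*b = a*b' := by rw [← h4, hcomm _ hee (a*b'), h5]
  calc b = b*(a*b) := by rw [show b*(a*b) = b*a*b by noncomm_ring, h2]
    _ = b*(a*b') := by rw [hf]
    _ = (a*b)*b' := by rw [show b*(a*b') = (b*a)*b' by noncomm_ring, ← h3]
    _ = (a*b')*b' := by rw [hf]
    _ = b' := by rw [h3', show (b'*a)*b' = b'*a*b' by noncomm_ring, h2']

lemma exists_grpInv (hreg : ∀ a : A, ∃ t : A, a * t * a = a)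
    (hcomm : ∀ e : A, e * e = e → ∀ s : A, e * s = s * e) (a : A) :
    ∃ b : A, a * b * a = a ∧ b * a * b = b ∧ a * b = b * a := by
  obtain ⟨t, ht⟩ := hreg a
  have he : (a*t)*(a*t) = a*t := by
    rw [show (a*t)*(a*t) = (a*t*a)*t by noncomm_ring, ht]
  have hf : (t*a)*(t*a) = t*a := by
    rw [show (t*a)*(t*a) = t*(a*t*a) by noncomm_ring, ht]
  -- a * (a*t) = a
  have hae : a*(a*t) = a := by rw [← hcomm (a*t) he a, ht]
  -- a * (t*a) = a
  have haf : a*(t*a) = a := by rw [show a*(t*a) = a*t*a by noncomm_ring, ht]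
  -- f*e = f
  have hfe : (t*a)*(a*t) = t*a := by
    rw [show (t*a)*(a*t) = t*(a*(a*t)) by noncomm_ring, hae]
  -- e*f = e
  have hef : (a*t)*(t*a) = a*t := by
    have htf : t*(t*a) = (t*a)*t := (hcomm (t*a) hf t).symm
    rw [show (a*t)*(t*a) = a*(t*(t*a)) by noncomm_ring, htf,
      show a*((t*a)*t) = (a*(t*a))*t by noncomm_ring, haf]
  have heqf : a*t = t*a := by rw [← hef, hcomm (a*t) he (t*a), hfe]
  refine ⟨t*a*t, ?_, ?_, ?_⟩
  · rw [show a*(t*a*t)*a = (a*(t*a))*(t*a) by noncomm_ring, haf, haf]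
  · rw [show (t*a*t)*a*(t*a*t) = (t*(a*t*a))*(t*a*t) by noncomm_ring, ht,
      show (t*a)*(t*a*t) = ((t*a)*(t*a))*t by noncomm_ring, hf]
  · rw [show a*(t*a*t) = (a*t*a)*t by noncomm_ring, ht,
      show (t*a*t)*a = t*(a*t*a) by noncomm_ring, ht, heqf]
lemma mul_eps_mul {e : A} (hcent : ∀ s : A, e * s = s * e) (he : e * e = e)
    (u v : A) : (u*e)*(v*e) = (u*v)*e := by
  rw [show (u*e)*(v*e) = u*(e*v)*e by noncomm_ring, hcent v,
    show u*(v*e)*e = (u*v)*(e*e) by noncomm_ring, he]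

lemma join_idem (hcomm : ∀ e : A, e * e = e → ∀ s : A, e * s = s * e)
    {e f : A} (he : e * e = e) (hf : f * f = f) :
    (e+f-e*f)*(e+f-e*f) = e+f-e*f ∧ e*(e+f-e*f) = e ∧ f*(e+f-e*f) = f := by
  have hc : e*f = f*e := hcomm e he f
  have h1 : e*(e+f-e*f) = e := by
    calc e*(e+f-e*f) = e*e + e*f - (e*e)*f := by noncomm_ring
      _ = e := by rw [he, add_sub_cancel_right]
  have h2 : f*(e+f-e*f) = f := by
    calc f*(e+f-e*f) = f*e + f*f - (f*e)*f := by noncomm_ring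
      _ = f := by rw [hf, ← hc, mul_assoc, hf, add_sub_cancel_left]
  refine ⟨?_, h1, h2⟩
  calc (e+f-e*f)*(e+f-e*f)
      = e*(e+f-e*f) + f*(e+f-e*f) - (e*f)*(e+f-e*f) := by noncomm_ring
    _ = e + f - e*f := by rw [h1, h2, mul_assoc, h2]

end RingLemmas

section ModLemmas
variable {R M : Type*} [Ring R] [AddCommGroup M] [Module R M]

open Classical in
/-- Restriction of an endomorphism of `N` along a map `ε : M → M` with range in `N`. -/
noncomputable def restrE (N : Submodule R M) (u : Module.End R ↥N) (ε : Module.End R M) :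
    Module.End R M :=
  if h : ∀ x : M, ε x ∈ N then N.subtype ∘ₗ (u ∘ₗ LinearMap.codRestrict N ε h) else 0

lemma restrE_apply (N : Submodule R M) (u : Module.End R ↥N) (ε : Module.End R M)
    (h : ∀ x : M, ε x ∈ N) (x : M) : restrE N u ε x = ↑(u ⟨ε x, h x⟩) := by
  rw [restrE, dif_pos h]; rfl

lemma restrE_mul (N : Submodule R M) (u : Module.End R ↥N) {ε : Module.End R M}
    (hε : ε * ε = ε) (h : ∀ x : M, ε x ∈ N) : restrE N u ε * ε = restrE N u ε := by
  ext x
  rw [Module.End.mul_apply, restrE_apply N u ε h, restrE_apply N u ε h]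
  have hx : ε (ε x) = ε x := by rw [← Module.End.mul_apply, hε]
  exact congrArg _ (congrArg u (Subtype.ext hx))

lemma eps_mul_restrE (N : Submodule R M)
    (hcomm : ∀ e : Module.End R M, e * e = e → ∀ s : Module.End R M, e * s = s * e)
    (u : Module.End R ↥N) {ε : Module.End R M}
    (hε : ε * ε = ε) (h : ∀ x : M, ε x ∈ N) : ε * restrE N u ε = restrE N u ε := by
  rw [hcomm ε hε, restrE_mul N u hε h]

lemma restrE_val (N : Submodule R M) (u : Module.End R ↥N) (ε : Module.End R M)
    (h : ∀ x : M, ε x ∈ N) (y : ↥N) (hy : ε ↑y = ↑y) : restrE N u ε ↑y = ↑(u y) := by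
  rw [restrE_apply N u ε h]
  exact congrArg _ (congrArg u (Subtype.ext hy))

lemma join_fix_left {ε δ : Module.End R M} (hc : ε * δ = δ * ε) {x : M} (hx : ε x = x) :
    (ε + δ - ε * δ) x = x := by
  have h1 : ε (δ x) = δ x := by rw [← Module.End.mul_apply, hc, Module.End.mul_apply, hx]
  rw [LinearMap.sub_apply, LinearMap.add_apply, Module.End.mul_apply, hx, h1,
    add_sub_cancel_right]

lemma join_fix_right {ε δ : Module.End R M} {x : M} (hx : δ x = x) :
    (ε + δ - ε * δ) x = x := by
  rw [LinearMap.sub_apply, LinearMap.add_apply, Module.End.mul_apply, hx, add_sub_cancel_left]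

lemma join_mem (N : Submodule R M) {ε δ : Module.End R M} (hε : ∀ x, ε x ∈ N)
    (hδ : ∀ x, δ x ∈ N) : ∀ x, (ε + δ - ε * δ) x ∈ N := by
  intro x
  rw [LinearMap.sub_apply, LinearMap.add_apply, Module.End.mul_apply]
  exact sub_mem (add_mem (hε x) (hδ x)) (hε _)

lemma exists_fix (hM : IsAbelianEndoregular R M) (N : Submodule R M) (hN : IsMGenerated N)
    {x : M} (hx : x ∈ N) :
    ∃ ε : Module.End R M, ε * ε = ε ∧ (∀ y, ε y ∈ N) ∧ ε x = x := by
  rw [hN] at hx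
  refine Submodule.iSup_induction (x := x) _ hx ?_ ⟨0, by simp, fun y => by simp, by simp⟩ ?_
  · rintro ⟨f, hf⟩ x ⟨y, rfl⟩
    obtain ⟨t, ht⟩ := hM.1 f
    refine ⟨f * t, by rw [show (f*t)*(f*t) = (f*t*f)*t by noncomm_ring, ht],
      fun z => hf ⟨t z, rfl⟩, ?_⟩
    show (f * t) (f y) = f y
    rw [← Module.End.mul_apply, ht]
  · rintro x y ⟨ε₁, h1, hm1, hf1⟩ ⟨ε₂, h2, hm2, hf2⟩
    have hc : ε₁ * ε₂ = ε₂ * ε₁ := hM.2 ε₁ h1 ε₂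
    obtain ⟨hdd, -, -⟩ := join_idem hM.2 h1 h2
    refine ⟨ε₁ + ε₂ - ε₁ * ε₂, hdd, join_mem N hm1 hm2, ?_⟩
    rw [map_add, join_fix_left hc hf1, join_fix_right hf2]

end ModLemmas

section Parts
variable {R M : Type*} [Ring R] [AddCommGroup M] [Module R M]

lemma restrE_idem (N : Submodule R M)
    (hcomm : ∀ e : Module.End R M, e * e = e → ∀ s : Module.End R M, e * s = s * e)
    (e : Module.End R ↥N) (he : e * e = e) {ε : Module.End R M}
    (hεi : ε * ε = ε) (hεm : ∀ x, ε x ∈ N) :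
    restrE N e ε * restrE N e ε = restrE N e ε := by
  have hεE : ε * restrE N e ε = restrE N e ε := eps_mul_restrE N hcomm e hεi hεm
  ext z
  rw [Module.End.mul_apply, restrE_apply N e ε hεm (restrE N e ε z)]
  have h1 : (⟨ε (restrE N e ε z), hεm _⟩ : ↥N) = e ⟨ε z, hεm z⟩ := by
    apply Subtype.ext
    show ε ((restrE N e ε) z) = ↑(e ⟨ε z, hεm z⟩)
    rw [← Module.End.mul_apply ε (restrE N e ε) z, hεE, restrE_apply N e ε hεm z]
  rw [h1, ← Module.End.mul_apply e e, he, restrE_apply N e ε hεm z]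

lemma part2 (hM : IsAbelianEndoregular R M) (N : Submodule R M) (hN : IsMGenerated N) :
    ∀ e : Module.End R ↥N, e * e = e → ∀ s : Module.End R ↥N, e * s = s * e := by
  intro e he s
  ext x
  obtain ⟨ε, hεi, hεm, hεf⟩ := exists_fix hM N hN x.2
  have hεE : ε * restrE N e ε = restrE N e ε := eps_mul_restrE N hM.2 e hεi hεm
  have hεS : ε * restrE N s ε = restrE N s ε := eps_mul_restrE N hM.2 s hεi hεm
  have hEi := restrE_idem N hM.2 e he hεi hεm
  have hx := DFunLike.congr_fun (hM.2 _ hEi (restrE N s ε)) (x : M)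
  rw [Module.End.mul_apply, Module.End.mul_apply] at hx
  have hS'x : restrE N s ε ↑x = ↑(s x) := restrE_val N s ε hεm x hεf
  have hEx : restrE N e ε ↑x = ↑(e x) := restrE_val N e ε hεm x hεf
  have hf1 : ε ↑(s x) = ↑(s x) := by rw [← hS'x, ← Module.End.mul_apply, hεS, hS'x]
  have hf2 : ε ↑(e x) = ↑(e x) := by rw [← hEx, ← Module.End.mul_apply, hεE, hEx]
  rw [hS'x, hEx, restrE_val N e ε hεm (s x) hf1, restrE_val N s ε hεm (e x) hf2] at hx
  exact hx

lemma part1 (hM : IsAbelianEndoregular R M) (N : Submodule R M) (hN : IsMGenerated N) :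
    ∀ s : Module.End R ↥N, ∃ t : Module.End R ↥N, s * t * s = s := by
  classical
  obtain ⟨hreg, hcomm⟩ := hM
  choose B hB1 hB2 hB3 using exists_grpInv hreg hcomm
  intro s
  -- Step 1: B (restrE N s ε) is fixed by ε on both sides
  have hBε : ∀ ε, ε * ε = ε → (∀ x, ε x ∈ N) →
      B (restrE N s ε) * ε = B (restrE N s ε) ∧
      ε * B (restrE N s ε) = B (restrE N s ε) := by
    intro ε hi hm
    set a := restrE N s ε with ha
    have hedge1 : a * ε = a := restrE_mul N s hi hm
    have hedge2 : ε * a = a := eps_mul_restrE N hcomm s hi hm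
    have k1 : a * (B a * ε) * a = a := by
      rw [show a*(B a*ε)*a = (a*B a)*(ε*a) by noncomm_ring, hedge2, hB1 a]
    have k2 : (B a * ε) * a * (B a * ε) = B a * ε := by
      rw [show (B a*ε)*a*(B a*ε) = B a*(ε*a)*(B a*ε) by noncomm_ring, hedge2,
        show B a*a*(B a*ε) = (B a*a*B a)*ε by noncomm_ring, hB2 a]
    have k3 : a * (B a * ε) = (B a * ε) * a := by
      rw [show a*(B a*ε) = (a*B a)*ε by noncomm_ring,
        show (B a*ε)*a = B a*(ε*a) by noncomm_ring, hedge2,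
        ← hcomm ε hi (a*B a), ← mul_assoc, hedge2, hB3 a]
    have huniq : B a = B a * ε :=
      grpInv_unique hcomm (hB1 a) (hB2 a) (hB3 a) k1 k2 k3
    exact ⟨huniq.symm, by rw [hcomm ε hi (B a), ← huniq]⟩
  -- Step 2: compatibility along ε ≤ δ
  have hcompat : ∀ ε δ, ε * ε = ε → (∀ x, ε x ∈ N) → δ * δ = δ → (∀ x, δ x ∈ N) →
      ε * δ = ε → B (restrE N s ε) = B (restrE N s δ) * ε := by
    intro ε δ hεi hεm hδi hδm hεδ
    have hδε : δ * ε = ε := by rw [hcomm δ hδi ε, hεδ]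
    have hAeq : restrE N s ε = restrE N s δ * ε := by
      ext x
      rw [Module.End.mul_apply, restrE_apply N s ε hεm x, restrE_apply N s δ hδm (ε x)]
      refine congrArg _ (congrArg s (Subtype.ext ?_))
      show ε x = δ (ε x)
      rw [← Module.End.mul_apply δ ε x, hδε]
    have hme : ∀ u v : Module.End R M, (u*ε)*(v*ε) = (u*v)*ε :=
      mul_eps_mul (hcomm ε hεi) hεi
    set a' := restrE N s δ with ha'
    have k1 : (a'*ε)*(B a'*ε)*(a'*ε) = a'*ε := by
      rw [hme a' (B a'), hme (a'*B a') a', hB1 a']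
    have k2 : (B a'*ε)*(a'*ε)*(B a'*ε) = B a'*ε := by
      rw [hme (B a') a', hme (B a'*a') (B a'), hB2 a']
    have k3 : (a'*ε)*(B a'*ε) = (B a'*ε)*(a'*ε) := by
      rw [hme a' (B a'), hme (B a') a', hB3 a']
    rw [hAeq]
    exact grpInv_unique hcomm (hB1 _) (hB2 _) (hB3 _) k1 k2 k3
  -- Step 3: fixing idempotents
  have hfix : ∀ x : ↥N, ∃ ε : Module.End R M, (ε * ε = ε ∧ ∀ y, ε y ∈ N) ∧ ε ↑x = ↑x := fun x => by
    obtain ⟨ε, h1, h2, h3⟩ := exists_fix ⟨hreg, hcomm⟩ N hN x.2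
    exact ⟨ε, ⟨h1, h2⟩, h3⟩
  choose E hE1 hE2 using hfix
  -- Step 4: invariance
  have hINV : ∀ ε ε' (x : M), ε * ε = ε → (∀ y, ε y ∈ N) → ε' * ε' = ε' → (∀ y, ε' y ∈ N) →
      ε x = x → ε' x = x → B (restrE N s ε) x = B (restrE N s ε') x := by
    intro ε ε' x hi hm hi' hm' hf hf'
    obtain ⟨hdd, hed, hed'⟩ := join_idem hcomm hi hi'
    have hdm := join_mem N hm hm'
    rw [hcompat ε _ hi hm hdd hdm hed, hcompat ε' _ hi' hm' hdd hdm hed',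
      Module.End.mul_apply, Module.End.mul_apply, hf, hf']
  -- Step 5: membership
  have hmemB : ∀ x : ↥N, B (restrE N s (E x)) ↑x ∈ N := fun x => by
    have h := DFunLike.congr_fun (hBε (E x) (hE1 x).1 (hE1 x).2).2 (x : M)
    rw [Module.End.mul_apply] at h
    rw [← h]
    exact (hE1 x).2 _
  -- Step 6: construct t
  have tlin : ∃ t : Module.End R ↥N, ∀ x : ↥N, ↑(t x) = B (restrE N s (E x)) ↑x := by
    refine ⟨⟨⟨fun x => ⟨B (restrE N s (E x)) ↑x, hmemB x⟩, ?_⟩, ?_⟩, fun x => rfl⟩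
    · intro x y
      apply Subtype.ext
      show B (restrE N s (E (x + y))) ↑(x + y)
          = B (restrE N s (E x)) ↑x + B (restrE N s (E y)) ↑y
      obtain ⟨hdd, hedx, hedy⟩ := join_idem hcomm (hE1 x).1 (hE1 y).1
      have hdm := join_mem N (hE1 x).2 (hE1 y).2
      have hcxy : E x * E y = E y * E x := hcomm (E x) (hE1 x).1 (E y)
      have hfx : (E x + E y - E x * E y) ↑x = ↑x := join_fix_left hcxy (hE2 x)
      have hfy : (E x + E y - E x * E y) ↑y = ↑y := join_fix_right (hE2 y)
      have hfxy : (E x + E y - E x * E y) ↑(x + y) = ↑(x + y) := by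
        rw [Submodule.coe_add, map_add, hfx, hfy]
      calc B (restrE N s (E (x+y))) ↑(x+y)
          = B (restrE N s (E x + E y - E x * E y)) ↑(x+y) :=
            hINV _ _ _ (hE1 _).1 (hE1 _).2 hdd hdm (hE2 _) hfxy
        _ = B (restrE N s (E x + E y - E x * E y)) ↑x
            + B (restrE N s (E x + E y - E x * E y)) ↑y := by
            rw [Submodule.coe_add, map_add]
        _ = B (restrE N s (E x)) ↑x + B (restrE N s (E y)) ↑y := by
            rw [hINV _ (E x) ↑x hdd hdm (hE1 x).1 (hE1 x).2 hfx (hE2 x),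
              hINV _ (E y) ↑y hdd hdm (hE1 y).1 (hE1 y).2 hfy (hE2 y)]
    · intro r x
      apply Subtype.ext
      show B (restrE N s (E (r • x))) ↑(r • x) = r • (B (restrE N s (E x)) ↑x)
      have hsm : (E x) ↑(r • x) = ↑(r • x) := by
        rw [Submodule.coe_smul, map_smul, hE2 x]
      rw [hINV (E (r • x)) (E x) ↑(r • x) (hE1 _).1 (hE1 _).2 (hE1 x).1 (hE1 x).2
        (hE2 _) hsm, Submodule.coe_smul, map_smul]
  obtain ⟨t, htval⟩ := tlin
  refine ⟨t, ?_⟩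
  ext x
  show (↑(s (t (s x))) : M) = (↑(s x) : M)
  have hPi := (hE1 x).1
  have hPm := (hE1 x).2
  have hval : ∀ (y : ↥N), (E x) ↑y = ↑y → restrE N s (E x) ↑y = ↑(s y) :=
    fun y hy => restrE_val N s (E x) hPm y hy
  have hεA : E x * restrE N s (E x) = restrE N s (E x) :=
    eps_mul_restrE N hcomm s hPi hPm
  have hεB := (hBε (E x) hPi hPm).2
  have step1 : (↑(s x) : M) = restrE N s (E x) ↑x := (hval x (hE2 x)).symm
  have step2 : (E x) ↑(s x) = ↑(s x) := by
    rw [step1, ← Module.End.mul_apply, hεA]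
  have step3 : (↑(t (s x)) : M) = B (restrE N s (E x)) ↑(s x) := by
    rw [htval (s x)]
    exact hINV (E (s x)) (E x) ↑(s x) (hE1 _).1 (hE1 _).2 hPi hPm (hE2 _) step2
  have step4 : (E x) ↑(t (s x)) = ↑(t (s x)) := by
    rw [step3, ← Module.End.mul_apply, hεB]
  have step5 : (↑(s (t (s x))) : M) = restrE N s (E x) ↑(t (s x)) :=
    (hval _ step4).symm
  rw [step5, step3, step1]
  have h := DFunLike.congr_fun (hB1 (restrE N s (E x))) (x : M)
  rw [Module.End.mul_apply, Module.End.mul_apply] at h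
  exact h

end Parts

theorem stmt_14 {R M : Type*} [Ring R] [AddCommGroup M] [Module R M]
    (hM : IsAbelianEndoregular R M) (N : Submodule R M) (hN : IsMGenerated N) :
    IsAbelianEndoregular R N := ⟨part1 hM N hN, part2 hM N hN⟩
end

section
/- Let {M_i}_{i∈I} be a family of R-modules. Then ⊕_{i∈I} M_i is abelian endoregular if and only if each M_i is abelian endoregular and each M_i is a fully invariant submodule of ⊕_{i∈I} M_i. -/
open DirectSum

theorem stmt_15 {R : Type*} [Ring R] {I : Type*} [DecidableEq I]
    (M : I → Type*) [∀ i, AddCommGroup (M i)] [∀ i, Module R (M i)] :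
    IsAbelianEndoregular R (⨁ i, M i) ↔
      ((∀ i, IsAbelianEndoregular R (M i)) ∧
        ∀ i, ∀ φ : Module.End R (⨁ i, M i),
          (LinearMap.range (DirectSum.lof R I M i)).map φ ≤
            LinearMap.range (DirectSum.lof R I M i)) := by
  set li : ∀ i, M i →ₗ[R] ⨁ i, M i := fun i => DirectSum.lof R I M i with hli
  set pr : ∀ i, (⨁ i, M i) →ₗ[R] M i := fun i => DirectSum.component R I M i with hpr
  have hpl : ∀ i (x : M i), pr i (li i x) = x := fun i x =>
    DirectSum.component.lof_self (R := R) i x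
  constructor
  · rintro ⟨hreg, hab⟩
    have hE : ∀ i, ((li i).comp (pr i) : Module.End R (⨁ i, M i)) * ((li i).comp (pr i)) =
        (li i).comp (pr i) := by
      intro i
      refine LinearMap.ext fun x => ?_
      simp [Module.End.mul_apply, LinearMap.comp_apply, hpl]
    refine ⟨fun i => ⟨?_, ?_⟩, ?_⟩
    · -- regularity of End (M i)
      intro s
      obtain ⟨T, hT⟩ := hreg ((li i).comp (s.comp (pr i)))
      refine ⟨(pr i).comp (T.comp (li i)), ?_⟩
      refine LinearMap.ext fun x => ?_
      have h1 := DFunLike.congr_fun hT (li i x)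
      simp only [Module.End.mul_apply, LinearMap.comp_apply, hpl] at h1 ⊢
      have h2 := congrArg (pr i) h1
      simpa [hpl] using h2
    · -- abelian-ness of End (M i)
      intro e he s
      have hEe : ((li i).comp (e.comp (pr i)) : Module.End R (⨁ i, M i)) *
          ((li i).comp (e.comp (pr i))) = (li i).comp (e.comp (pr i)) := by
        refine LinearMap.ext fun x => ?_
        simp only [Module.End.mul_apply, LinearMap.comp_apply, hpl]
        congr 1
        exact DFunLike.congr_fun he (pr i x)
      have h3 := hab _ hEe ((li i).comp (s.comp (pr i)))
      refine LinearMap.ext fun x => ?_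
      have h4 := DFunLike.congr_fun h3 (li i x)
      simp only [Module.End.mul_apply, LinearMap.comp_apply, hpl] at h4 ⊢
      have h5 := congrArg (pr i) h4
      simpa [hpl] using h5
    · -- full invariance
      intro i φ
      rintro y hy
      obtain ⟨z, hz, rfl⟩ := hy
      obtain ⟨x, rfl⟩ := hz
      have h6 := DFunLike.congr_fun (hab _ (hE i) φ) (li i x)
      simp only [Module.End.mul_apply, LinearMap.comp_apply, hpl] at h6
      exact ⟨pr i (φ (li i x)), h6⟩
  · rintro ⟨h1, h2⟩
    have key : ∀ (φ : Module.End R (⨁ i, M i)) (i) (x : M i),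
        φ (li i x) = li i (pr i (φ (li i x))) := by
      intro φ i x
      obtain ⟨y, hy⟩ := h2 i φ (Submodule.mem_map_of_mem ⟨x, rfl⟩)
      rw [← hy, hpl]
    constructor
    · intro φ
      choose ψ hψ using fun i => (h1 i).1 ((pr i).comp (φ.comp (li i)))
      refine ⟨DirectSum.toModule R I (⨁ i, M i) (fun i => (li i).comp (ψ i)), ?_⟩
      refine DirectSum.linearMap_ext R fun i => ?_
      refine LinearMap.ext fun x => ?_
      simp only [Module.End.mul_apply, LinearMap.comp_apply]
      rw [key φ i x, DirectSum.toModule_lof, LinearMap.comp_apply,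
        key φ i (ψ i (pr i (φ (li i x))))]
      congr 1
      have := DFunLike.congr_fun (hψ i) x
      simpa [Module.End.mul_apply, LinearMap.comp_apply] using this
    · intro e he s
      have hei : ∀ i, ((pr i).comp (e.comp (li i)) : Module.End R (M i)) *
          ((pr i).comp (e.comp (li i))) = (pr i).comp (e.comp (li i)) := by
        intro i
        refine LinearMap.ext fun x => ?_
        simp only [Module.End.mul_apply, LinearMap.comp_apply]
        rw [← key e i x, ← Module.End.mul_apply e e]
        rw [he]
      refine DirectSum.linearMap_ext R fun i => ?_
      refine LinearMap.ext fun x => ?_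
      have h7 := DFunLike.congr_fun ((h1 i).2 _ (hei i) ((pr i).comp (s.comp (li i)))) x
      simp only [Module.End.mul_apply, LinearMap.comp_apply] at h7 ⊢
      rw [key s i x, key e i (pr i (s (li i x))), key e i x, key s i (pr i (e (li i x)))]
      rw [h7]
end

section
/- Let M be a quasi-duo R-module which is a subdirect product of simple modules. Then every idempotent in End_R(M) is central. In particular, if M is additionally endoregular, then M is abelian endoregular. -/
theorem stmt_18 {R M : Type*} [Ring R] [AddCommGroup M] [Module R M]
    {ι : Type*} (S : ι → Type*) [∀ j, AddCommGroup (S j)] [∀ j, Module R (S j)]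
    (hsimple : ∀ j, IsSimpleModule R (S j))
    (α : M →ₗ[R] ∀ j, S j) (hα : Function.Injective α)
    (hsurj : ∀ j, Function.Surjective ((LinearMap.proj j).comp α : M →ₗ[R] S j))
    (hqd : ∀ N : Submodule R M, IsCoatom N → ∀ φ : Module.End R M, N.map φ ≤ N) :
    (∀ e : Module.End R M, e * e = e → ∀ s : Module.End R M, e * s = s * e) ∧
      ((∀ s : Module.End R M, ∃ t : Module.End R M, s * t * s = s) →
        IsAbelianEndoregular R M) := by
  set N : ι → Submodule R M := fun j => LinearMap.ker ((LinearMap.proj j).comp α) with hN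
  have hNcoatom : ∀ j, IsCoatom (N j) := by
    intro j
    have := hsimple j
    exact LinearMap.isCoatom_ker_of_surjective (hsurj j)
  -- intersection of the kernels is trivial
  have hmem : ∀ x : M, (∀ j, x ∈ N j) → x = 0 := by
    intro x hx
    apply hα
    rw [map_zero]
    funext j
    exact hx j
  -- a square-zero endomorphism is zero
  -- a square-zero endomorphism is zero
  have hsq : ∀ φ : Module.End R M, φ * φ = 0 → φ = 0 := by
    intro φ hφ
    have hrange : ∀ j, ∀ x : M, φ x ∈ N j := by
      intro j x
      by_contra hx
      have hsup : N j ⊔ Submodule.span R {φ x} = ⊤ := by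
        refine (hNcoatom j).2 _ ?_
        refine lt_of_le_of_ne le_sup_left ?_
        intro h
        apply hx
        rw [h]
        exact Submodule.mem_sup_right (Submodule.mem_span_singleton_self _)
      have hxtop : x ∈ N j ⊔ Submodule.span R {φ x} := hsup ▸ Submodule.mem_top
      obtain ⟨n, hn, y, hy, hxy⟩ := Submodule.mem_sup.1 hxtop
      obtain ⟨r, hr⟩ := Submodule.mem_span_singleton.1 hy
      have hφφ : φ (φ x) = 0 := by
        have := congrArg (fun f : Module.End R M => f x) hφ
        simpa using this
      have key : φ x = φ n := by
        calc φ x = φ (n + r • φ x) := by rw [hr, hxy]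
          _ = φ n + r • φ (φ x) := by rw [map_add, map_smul]
          _ = φ n := by rw [hφφ, smul_zero, add_zero]
      exact hx (key ▸ hqd (N j) (hNcoatom j) φ ⟨n, hn, rfl⟩)
    ext x
    exact hmem (φ x) (fun j => hrange j x)
  have main : ∀ e : Module.End R M, e * e = e → ∀ s : Module.End R M, e * s = s * e := by
    intro e he s
    have h0 : (1 - e) * e = 0 := by rw [sub_mul, one_mul, he, sub_self]
    have h0' : e * (1 - e) = 0 := by rw [mul_sub, mul_one, he, sub_self]
    have h1 : e * s * (1 - e) = 0 := by
      apply hsq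
      have heq : e * s * (1 - e) * (e * s * (1 - e)) = e * s * ((1 - e) * e) * (s * (1 - e)) := by
        noncomm_ring
      rw [heq, h0, mul_zero, zero_mul]
    have h2' : (1 - e) * (s * e) = 0 := by
      apply hsq
      have heq : (1 - e) * (s * e) * ((1 - e) * (s * e)) = (1 - e) * s * (e * (1 - e)) * (s * e) := by
        noncomm_ring
      rw [heq, h0', mul_zero, zero_mul]
    have he1 : e * s - e * s * e = 0 := by
      have := h1
      rw [mul_sub, mul_one] at this
      exact this
    have he2 : s * e - e * (s * e) = 0 := by
      have := h2'
      rw [sub_mul, one_mul] at this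
      exact this
    have ha : e * s = e * s * e := sub_eq_zero.1 he1
    have hb : s * e = e * s * e := (sub_eq_zero.1 he2).trans (mul_assoc e s e).symm
    exact ha.trans hb.symm
  refine ⟨main, fun hreg => ⟨hreg, main⟩⟩
end

section
/- If E(M), the injective hull of an R-module M, is abelian endoregular, then every essentially closed submodule of M is fully invariant in M and End_R(M) is a reduced ring. -/
/-- `N` is essential in `P` (as submodules of `M`). -/
def IsEssentialIn {R M : Type*} [Ring R] [AddCommGroup M] [Module R M]
    (N P : Submodule R M) : Prop :=
  N ≤ P ∧ ∀ Q : Submodule R M, Q ≤ P → N ⊓ Q = ⊥ → Q = ⊥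

section Aux

variable {R M E : Type*} [Ring R] [AddCommGroup M] [Module R M]
    [AddCommGroup E] [Module R E]

/-- Extend `ι ∘ φ` along `ι` using injectivity of `E`. -/
lemma aux_extend (hE : Module.Injective R E) (ι : M →ₗ[R] E) (hι : Function.Injective ι)
    (φ : Module.End R M) : ∃ ψ : Module.End R E, ∀ m, ψ (ι m) = ι (φ m) := by
  let e : M ≃ₗ[R] LinearMap.range ι := LinearEquiv.ofInjective ι hι
  let g : (LinearMap.range ι) →ₗ[R] E := ι ∘ₗ φ ∘ₗ (e.symm : LinearMap.range ι →ₗ[R] M)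
  obtain ⟨h, hh⟩ := hE.out (LinearMap.range ι).subtype
    (Submodule.injective_subtype _) g
  refine ⟨h, fun m => ?_⟩
  have h2 : h (ι m) = g (e m) := hh (e m)
  rw [h2]
  simp [g, e]

/-- A maximal submodule disjoint from `K`. -/
lemma aux_compl (K : Submodule R E) :
    ∃ C : Submodule R E, K ⊓ C = ⊥ ∧ ∀ D, K ⊓ D = ⊥ → C ≤ D → D = C := by
  have hzorn : ∀ c ⊆ {C : Submodule R E | K ⊓ C = ⊥}, IsChain (· ≤ ·) c → ∀ y ∈ c,
      ∃ ub ∈ {C : Submodule R E | K ⊓ C = ⊥}, ∀ z ∈ c, z ≤ ub := by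
    intro c hcs hchain y hy
    refine ⟨sSup c, ?_, fun z hz => le_sSup hz⟩
    rw [Set.mem_setOf_eq, eq_bot_iff]
    intro x hx
    obtain ⟨hxK, hxS⟩ := Submodule.mem_inf.mp hx
    obtain ⟨p, hpc, hxp⟩ := (Submodule.mem_sSup_of_directed ⟨y, hy⟩
      hchain.directedOn).mp hxS
    have hm : x ∈ K ⊓ p := Submodule.mem_inf.mpr ⟨hxK, hxp⟩
    rw [hcs hpc] at hm
    exact hm
  obtain ⟨C, -, hC⟩ := zorn_le_nonempty₀ {C : Submodule R E | K ⊓ C = ⊥} hzorn ⊥ (by simp)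
  exact ⟨C, hC.prop, fun D hD hCD => le_antisymm (hC.le_of_ge hD hCD) hCD⟩

/-- Central idempotent `f` fixing `K` with `K` essential in `range f`. -/
lemma aux_idem (hE : Module.Injective R E) (habe : IsAbelianEndoregular R E)
    (K : Submodule R E) :
    ∃ f : Module.End R E, (∀ u : Module.End R E, f * u = u * f) ∧ (∀ x ∈ K, f x = x) ∧
      (∀ Q : Submodule R E, Q ≤ LinearMap.range f → K ⊓ Q = ⊥ → Q = ⊥) := by
  obtain ⟨C, hKC, hmax⟩ := aux_compl K
  set W : Submodule R E := K ⊔ C with hW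
  let K' : Submodule R W := K.comap W.subtype
  let C' : Submodule R W := C.comap W.subtype
  have hcompl : IsCompl K' C' := by
    constructor
    · rw [disjoint_iff, eq_bot_iff]
      rintro ⟨x, hxW⟩ hx
      obtain ⟨h1, h2⟩ := Submodule.mem_inf.mp hx
      have : x ∈ K ⊓ C := Submodule.mem_inf.mpr ⟨h1, h2⟩
      rw [hKC] at this
      simpa using this
    · rw [codisjoint_iff, eq_top_iff]
      rintro ⟨x, hxW⟩ -
      obtain ⟨k, hk, c, hc, rfl⟩ := Submodule.mem_sup.mp hxW
      have hkW : k ∈ W := le_sup_left (α := Submodule R E) hk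
      have hcW : c ∈ W := le_sup_right (α := Submodule R E) hc
      have : (⟨k + c, hxW⟩ : W) = ⟨k, hkW⟩ + ⟨c, hcW⟩ := rfl
      rw [this]
      exact Submodule.add_mem_sup (by exact hk) (by exact hc)
  let proj := Submodule.linearProjOfIsCompl K' C' hcompl
  let s₀ : (W : Submodule R E) →ₗ[R] E := W.subtype ∘ₗ K'.subtype ∘ₗ proj
  obtain ⟨s, hs⟩ := hE.out W.subtype (Submodule.injective_subtype _) s₀
  have hsK : ∀ x ∈ K, s x = x := by
    intro x hx
    have hxW : x ∈ W := le_sup_left (α := Submodule R E) hx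
    have hxK' : (⟨x, hxW⟩ : W) ∈ K' := hx
    have h2 : s x = s₀ ⟨x, hxW⟩ := hs ⟨x, hxW⟩
    rw [h2]
    show W.subtype (K'.subtype (proj ⟨x, hxW⟩)) = x
    rw [show proj ⟨x, hxW⟩ = ⟨⟨x, hxW⟩, hxK'⟩ from
      Submodule.linearProjOfIsCompl_apply_left hcompl ⟨⟨x, hxW⟩, hxK'⟩]
    rfl
  have hsC : ∀ x ∈ C, s x = 0 := by
    intro x hx
    have hxW : x ∈ W := le_sup_right (α := Submodule R E) hx
    have h2 : s x = s₀ ⟨x, hxW⟩ := hs ⟨x, hxW⟩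
    rw [h2]
    show W.subtype (K'.subtype (proj ⟨x, hxW⟩)) = 0
    rw [show proj ⟨x, hxW⟩ = 0 from Submodule.projectionOnto_apply_of_mem_right hcompl (x := ⟨x, hxW⟩) hx]
    simp
  obtain ⟨t, hts⟩ := habe.1 s
  have hidem : (t * s) * (t * s) = t * s := by
    rw [mul_assoc t s (t * s), ← mul_assoc s t s, hts]
  have hcent := habe.2 (t * s) hidem
  have hfs : (t * s) * s = s := by
    rw [hcent s, ← mul_assoc, hts]
  set f := t * s with hf
  have hfix : ∀ x ∈ K, f x = x := by
    intro x hx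
    have : f (s x) = s x := by
      rw [← Module.End.mul_apply, hfs]
    rw [hsK x hx] at this
    exact this
  refine ⟨f, hcent, hfix, ?_⟩
  intro Q hQ hKQ
  by_contra hQbot
  -- W is essential in E
  have hWQ : W ⊓ Q ≠ ⊥ := by
    intro hWQ
    have hKD : K ⊓ (C ⊔ Q) = ⊥ := by
      rw [eq_bot_iff]
      intro x hx
      obtain ⟨hxK, hxCQ⟩ := Submodule.mem_inf.mp hx
      obtain ⟨c, hc, q, hq, rfl⟩ := Submodule.mem_sup.mp hxCQ
      have hqW : q ∈ W := by
        have h1 : c + q - c ∈ W := by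
          refine Submodule.sub_mem _ ?_ (le_sup_right (α := Submodule R E) hc)
          exact le_sup_left (α := Submodule R E) hxK
        simpa using h1
      have hq0 : q ∈ W ⊓ Q := Submodule.mem_inf.mpr ⟨hqW, hq⟩
      rw [hWQ] at hq0
      have hq0 : q = 0 := by simpa using hq0
      subst hq0
      have : c + 0 ∈ K ⊓ C := Submodule.mem_inf.mpr ⟨hxK, by simpa using hc⟩
      rw [hKC] at this
      exact this
    have hQC : Q ≤ C := by
      have := hmax (C ⊔ Q) hKD le_sup_left
      rw [← this]
      exact le_sup_right
    have : Q ≤ W ⊓ Q := le_inf (hQC.trans (le_sup_right (α := Submodule R E))) le_rfl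
    rw [hWQ] at this
    exact hQbot (le_bot_iff.mp this)
  obtain ⟨q, hqWQ, hqne⟩ := Submodule.exists_mem_ne_zero_of_ne_bot hWQ
  obtain ⟨hqW, hqQ⟩ := Submodule.mem_inf.mp hqWQ
  obtain ⟨k, hk, c, hc, hkc⟩ := Submodule.mem_sup.mp hqW
  have hfq : f q = q := by
    obtain ⟨y, hy⟩ := hQ hqQ
    rw [← hy, ← Module.End.mul_apply, hidem]
  have hfq2 : f q = k := by
    rw [← hkc]
    have hfc : f c = 0 := by
      show t (s c) = 0
      rw [hsC c hc, map_zero]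
    rw [map_add, hfix k hk, hfc, add_zero]
  have : q ∈ K ⊓ Q := Submodule.mem_inf.mpr ⟨by rw [← hfq, hfq2]; exact hk, hqQ⟩
  rw [hKQ] at this
  exact hqne (by simpa using this)

end Aux

theorem stmt_19 {R M E : Type*} [Ring R] [AddCommGroup M] [Module R M]
    [AddCommGroup E] [Module R E]
    (hE : Module.Injective R E) (ι : M →ₗ[R] E) (hι : Function.Injective ι)
    (hess : ∀ Q : Submodule R E, Q ≠ ⊥ → LinearMap.range ι ⊓ Q ≠ ⊥)
    (habe : IsAbelianEndoregular R E) :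
    (∀ N : Submodule R M, (∀ P : Submodule R M, IsEssentialIn N P → N = P) →
      ∀ φ : Module.End R M, N.map φ ≤ N) ∧
    IsReduced (Module.End R M) := by
  constructor
  · -- fully invariant part
    intro N hN φ
    obtain ⟨ψ, hψ⟩ := aux_extend hE ι hι φ
    obtain ⟨f, hcent, hfix, hessf⟩ := aux_idem hE habe (N.map ι)
    set P : Submodule R M := (LinearMap.range f).comap ι with hP
    have hNP : N ≤ P := by
      intro n hn
      have : ι n ∈ N.map ι := Submodule.mem_map_of_mem hn
      have := hfix _ this
      exact ⟨ι n, this⟩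
    have hNPeq : N = P := by
      apply hN
      refine ⟨hNP, ?_⟩
      intro Q hQP hNQ
      have h1 : Q.map ι ≤ LinearMap.range f := by
        rintro _ ⟨q, hq, rfl⟩
        exact hQP hq
      have h2 : (N.map ι) ⊓ (Q.map ι) = ⊥ := by
        rw [← Submodule.map_inf _ hι, hNQ, Submodule.map_bot]
      have h3 := hessf _ h1 h2
      rw [eq_bot_iff]
      intro q hq
      have : ι q ∈ Submodule.map ι Q := Submodule.mem_map_of_mem hq
      rw [h3] at this
      have : ι q = 0 := by simpa using this
      have : q = 0 := hι (by simpa using this)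
      simpa using this
    rintro _ ⟨n, hn, rfl⟩
    rw [hNPeq]
    have h1 : f (ι n) = ι n := hfix _ (Submodule.mem_map_of_mem hn)
    have hstep : ψ (ι n) = f (ψ (ι n)) := by
      conv_lhs => rw [← h1]
      rw [← Module.End.mul_apply, ← hcent ψ, Module.End.mul_apply]
    have h2 : ι (φ n) = f (ψ (ι n)) := by rw [← hψ n]; exact hstep
    exact ⟨ψ (ι n), h2.symm⟩
  · -- reduced part
    have sq : ∀ φ : Module.End R M, φ * φ = 0 → φ = 0 := by
      intro φ hφ
      obtain ⟨ψ, hψ⟩ := aux_extend hE ι hι φ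
      obtain ⟨t, hts⟩ := habe.1 ψ
      have hidem : (t * ψ) * (t * ψ) = t * ψ := by
        rw [mul_assoc t ψ (t * ψ), ← mul_assoc ψ t ψ, hts]
      have hcent := habe.2 (t * ψ) hidem
      have hfψ : (t * ψ) * ψ = ψ := by
        rw [hcent ψ, ← mul_assoc, hts]
      ext m
      have h0 : ψ (ψ (ι m)) = 0 := by
        rw [hψ m, hψ (φ m), ← Module.End.mul_apply, hφ]
        simp
      have h1 : ψ (ι m) = 0 := by
        have : ((t * ψ) * ψ) (ι m) = ψ (ι m) := by rw [hfψ]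
        rw [← this]
        show t (ψ (ψ (ι m))) = 0
        rw [h0, map_zero]
      have : ι (φ m) = 0 := by rw [← hψ m, h1]
      have := hι (by simpa using this : ι (φ m) = ι 0)
      simpa using this
    constructor
    intro x hx
    obtain ⟨n, hn⟩ := hx
    clear hess
    induction n generalizing x with
    | zero =>
      have h1 : (1 : Module.End R M) = 0 := by simpa using hn
      calc x = x * 1 := (mul_one x).symm
        _ = x * 0 := by rw [h1]
        _ = 0 := mul_zero x
    | succ k ih =>
      rcases Nat.eq_zero_or_pos k with rfl | hk
      · simpa using hn
      · apply ih
        apply sq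
        have h2 : x ^ k * x ^ k = x ^ (k + 1) * x ^ (k - 1) := by
          rw [← pow_add, ← pow_add]
          congr 1
          omega
        rw [h2, hn, zero_mul]
end
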